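/- arXiv:1007.0048 — 6 statements merged into one kernel-verified Lean document; each statement's English description precedes it below -/
import Mathlib

section
/- If a Euclidean tetrahedron has all six dihedral angles equal, then all six edge lengths are equal, i.e., it is regular. -/
open RealInnerProductSpace

variable {E : Type*} [NormedAddCommGroup E] [InnerProductSpace ℝ E]



lemma key1 (x y z K X Y Z : ℝ) (hX : 0 < X) (hY : 0 < Y) (hZ : 0 < Z)
    (hx : X ^ 2 = 1 - x ^ 2) (hy : Y ^ 2 = 1 - y ^ 2) (hz : Z ^ 2 = 1 - z ^ 2)
    (hK : K ^ 2 < 1)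
    (e1 : K * (Y * Z) = x - y * z) (e2 : K * (X * Z) = y - x * z) :
    x = y := by
  by_contra hne
  have d1 : (x - y) * (1 + z) = K * Z * (Y - X) := by linear_combination e2 - e1
  have d2 : (x + y) * (1 - z) = K * Z * (Y + X) := by linear_combination - e1 - e2
  have hsq : (Y - X) * (Y + X) = (x - y) * (x + y) := by linear_combination hy - hx
  have hz1 : z ^ 2 < 1 := by nlinarith
  have hmul : ((x - y) * (1 + z)) * ((x + y) * (1 - z)) = (K * Z * (Y - X)) * (K * Z * (Y + X)) := by
    rw [d1, d2]
  have hfac : (x - y) * (x + y) * ((1 - z ^ 2) - K ^ 2 * Z ^ 2) = 0 := by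
    linear_combination hmul + (K ^ 2 * Z ^ 2) * hsq
  have heq : (1 - z ^ 2) - K ^ 2 * Z ^ 2 = (1 - K ^ 2) * Z ^ 2 := by linear_combination - hz
  have hposf : (0:ℝ) < (1 - z ^ 2) - K ^ 2 * Z ^ 2 := by
    rw [heq]; have : 0 < 1 - K ^ 2 := by linarith
    positivity
  have hxy : (x - y) * (x + y) = 0 := by
    rcases mul_eq_zero.mp hfac with h | h
    · exact h
    · exact absurd h hposf.ne'
  have hxpy : x + y = 0 := by
    rcases mul_eq_zero.mp hxy with h | h
    · exact absurd (by linarith : x = y) hne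
    · exact h
  have h0 : (Y - X) * (Y + X) = 0 := by rw [hsq, hxpy, mul_zero]
  have hYX : Y = X := by
    rcases mul_eq_zero.mp h0 with h | h
    · linarith
    · linarith
  have hd10 : (x - y) * (1 + z) = 0 := by rw [hYX] at d1; simpa using d1
  have h1z : 0 < 1 + z := by nlinarith
  rcases mul_eq_zero.mp hd10 with h | h
  · exact hne (by linarith)
  · linarith



lemma pair12 (a b c : E) (h : LinearIndependent ℝ ![a, b, c]) :
    LinearIndependent ℝ ![a, b] := by
  rw [Fintype.linearIndependent_iff] at h ⊢
  intro g hg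
  have h3 := h ![g 0, g 1, 0] (by simpa [Fin.sum_univ_three, Fin.sum_univ_two] using hg)
  intro i
  fin_cases i
  · simpa using h3 0
  · simpa using h3 1

lemma pair13 (a b c : E) (h : LinearIndependent ℝ ![a, b, c]) :
    LinearIndependent ℝ ![a, c] := by
  rw [Fintype.linearIndependent_iff] at h ⊢
  intro g hg
  have h3 := h ![g 0, 0, g 1] (by simpa [Fin.sum_univ_three, Fin.sum_univ_two] using hg)
  intro i
  fin_cases i
  · simpa using h3 0
  · simpa using h3 2

lemma pair23 (a b c : E) (h : LinearIndependent ℝ ![a, b, c]) :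
    LinearIndependent ℝ ![b, c] := by
  rw [Fintype.linearIndependent_iff] at h ⊢
  intro g hg
  have h3 := h ![0, g 0, g 1] (by simpa [Fin.sum_univ_three, Fin.sum_univ_two] using hg)
  intro i
  fin_cases i
  · simpa using h3 1
  · simpa using h3 2

lemma proj_indep (a b c : E) (h : LinearIndependent ℝ ![a, b, c]) (s t : ℝ) :
    LinearIndependent ℝ ![b - s • a, c - t • a] := by
  rw [Fintype.linearIndependent_iff] at h ⊢
  intro g hg
  have hg' : (-(g 0 * s + g 1 * t)) • a + g 0 • b + g 1 • c = 0 := by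
    have : g 0 • (b - s • a) + g 1 • (c - t • a) = 0 := by
      simpa [Fin.sum_univ_two] using hg
    linear_combination (norm := module) this
  have h3 := h ![-(g 0 * s + g 1 * t), g 0, g 1]
    (by simpa [Fin.sum_univ_three, add_assoc] using hg')
  intro i
  fin_cases i
  · simpa using h3 1
  · simpa using h3 2

lemma abs_inner_lt (a b : E) (h : LinearIndependent ℝ ![a, b]) :
    |⟪a, b⟫| < ‖a‖ * ‖b‖ := by
  rw [linearIndependent_fin2] at h
  obtain ⟨hb, hab⟩ := h
  simp only [Matrix.cons_val_one, Matrix.head_cons, Matrix.cons_val_zero] at hb hab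
  rcases lt_or_eq_of_le (abs_real_inner_le_norm a b) with h | h
  · exact h
  · exfalso
    have ha : a ≠ 0 := fun h0 => hab 0 (by simp [h0])
    have hn : ‖(⟪a, b⟫ : ℝ)‖ = ‖a‖ * ‖b‖ := by rwa [Real.norm_eq_abs]
    obtain ⟨r, hr0, hba⟩ := (norm_inner_eq_norm_iff ha hb).mp hn
    exact hab r⁻¹ (by rw [hba, smul_smul, inv_mul_cancel₀ hr0, one_smul])



lemma inner_div_sq_le (a b : E) (ha : a ≠ 0) (hb : b ≠ 0) :
    (⟪a, b⟫ / (‖a‖ * ‖b‖)) ^ 2 ≤ 1 := by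
  have h := abs_real_inner_le_norm a b
  have ha0 : (0:ℝ) < ‖a‖ := norm_pos_iff.mpr ha
  have hb0 : (0:ℝ) < ‖b‖ := norm_pos_iff.mpr hb
  rw [div_pow, div_le_one (by positivity)]
  rw [← sq_abs]
  nlinarith [abs_nonneg (⟪a, b⟫ : ℝ)]

lemma norm_proj (a b : E) (ha : a ≠ 0) (hb : b ≠ 0) :
    ‖b - (⟪b, a⟫ / ‖a‖ ^ 2) • a‖
      = ‖b‖ * Real.sqrt (1 - (⟪a, b⟫ / (‖a‖ * ‖b‖)) ^ 2) := by
  have ha0 : (0:ℝ) < ‖a‖ := norm_pos_iff.mpr ha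
  have hb0 : (0:ℝ) < ‖b‖ := norm_pos_iff.mpr hb
  have h2 : ‖b - (⟪b, a⟫ / ‖a‖ ^ 2) • a‖ ^ 2
      = ‖b‖ ^ 2 * (1 - (⟪a, b⟫ / (‖a‖ * ‖b‖)) ^ 2) := by
    rw [← real_inner_self_eq_norm_sq]
    simp only [inner_sub_left, inner_sub_right, real_inner_smul_left, real_inner_smul_right]
    simp only [real_inner_self_eq_norm_sq]
    rw [real_inner_comm b a]
    field_simp
    ring
  have := congrArg Real.sqrt h2
  rwa [Real.sqrt_sq (norm_nonneg _), Real.sqrt_mul (sq_nonneg _), Real.sqrt_sq hb0.le] at this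

lemma dihedral_eq (a b c : E) (ha : a ≠ 0) (hb : b ≠ 0) (hc : c ≠ 0) :
    Real.cos (InnerProductGeometry.angle (b - (⟪b, a⟫ / ‖a‖ ^ 2) • a)
        (c - (⟪c, a⟫ / ‖a‖ ^ 2) • a)) *
      (Real.sqrt (1 - (⟪a, c⟫ / (‖a‖ * ‖c‖)) ^ 2) * Real.sqrt (1 - (⟪a, b⟫ / (‖a‖ * ‖b‖)) ^ 2))
    = ⟪b, c⟫ / (‖b‖ * ‖c‖)
      - (⟪a, c⟫ / (‖a‖ * ‖c‖)) * (⟪a, b⟫ / (‖a‖ * ‖b‖)) := by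
  have ha0 : (0:ℝ) < ‖a‖ := norm_pos_iff.mpr ha
  have hb0 : (0:ℝ) < ‖b‖ := norm_pos_iff.mpr hb
  have hc0 : (0:ℝ) < ‖c‖ := norm_pos_iff.mpr hc
  set u := b - (⟪b, a⟫ / ‖a‖ ^ 2) • a with hu
  set w := c - (⟪c, a⟫ / ‖a‖ ^ 2) • a with hw
  set S := Real.sqrt (1 - (⟪a, b⟫ / (‖a‖ * ‖b‖)) ^ 2) with hS
  set T := Real.sqrt (1 - (⟪a, c⟫ / (‖a‖ * ‖c‖)) ^ 2) with hT
  have h1 : Real.cos (InnerProductGeometry.angle u w) * (‖u‖ * ‖w‖) = ⟪u, w⟫ :=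
    InnerProductGeometry.cos_angle_mul_norm_mul_norm u w
  have hinner : ⟪u, w⟫ = ⟪b, c⟫ - ⟪a, b⟫ * ⟪a, c⟫ / ‖a‖ ^ 2 := by
    rw [hu, hw]
    simp only [inner_sub_left, inner_sub_right, real_inner_smul_left, real_inner_smul_right]
    rw [real_inner_self_eq_norm_sq, real_inner_comm b a, real_inner_comm c a]
    field_simp
    ring
  rw [norm_proj a b ha hb, norm_proj a c ha hc, hinner, ← hS, ← hT] at h1
  have hA2 : (‖a‖:ℝ) ^ 2 ≠ 0 := by positivity
  field_simp at h1 ⊢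
  linear_combination h1



lemma inner_div_sq_lt (a b : E) (h : LinearIndependent ℝ ![a, b]) :
    (⟪a, b⟫ / (‖a‖ * ‖b‖)) ^ 2 < 1 := by
  have hlt := abs_inner_lt a b h
  have ha : a ≠ 0 := by
    have := h.ne_zero 0; simpa using this
  have hb : b ≠ 0 := by
    have := h.ne_zero 1; simpa using this
  have ha0 : (0:ℝ) < ‖a‖ := norm_pos_iff.mpr ha
  have hb0 : (0:ℝ) < ‖b‖ := norm_pos_iff.mpr hb
  rw [div_pow, div_lt_one (by positivity), ← sq_abs]
  nlinarith [abs_nonneg (⟪a, b⟫ : ℝ)]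

lemma cos_sq_lt_one (a b c : E) (h : LinearIndependent ℝ ![a, b, c]) :
    (Real.cos (InnerProductGeometry.angle (b - (⟪b, a⟫ / ‖a‖ ^ 2) • a)
        (c - (⟪c, a⟫ / ‖a‖ ^ 2) • a))) ^ 2 < 1 := by
  set u := b - (⟪b, a⟫ / ‖a‖ ^ 2) • a with hu
  set w := c - (⟪c, a⟫ / ‖a‖ ^ 2) • a with hw
  have hind : LinearIndependent ℝ ![u, w] := proj_indep a b c h _ _
  have hlt := abs_inner_lt u w hind
  have hu0 : u ≠ 0 := by have := hind.ne_zero 0; simpa using this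
  have hw0 : w ≠ 0 := by have := hind.ne_zero 1; simpa using this
  have hu1 : (0:ℝ) < ‖u‖ := norm_pos_iff.mpr hu0
  have hw1 : (0:ℝ) < ‖w‖ := norm_pos_iff.mpr hw0
  rw [InnerProductGeometry.cos_angle, div_pow, div_lt_one (by positivity), ← sq_abs]
  nlinarith [abs_nonneg (⟪u, w⟫ : ℝ)]

lemma vertex (a b c : E) (h : LinearIndependent ℝ ![a, b, c]) (K : ℝ)
    (h1 : Real.cos (InnerProductGeometry.angle (b - (⟪b, a⟫ / ‖a‖ ^ 2) • a)
        (c - (⟪c, a⟫ / ‖a‖ ^ 2) • a)) = K)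
    (h2 : Real.cos (InnerProductGeometry.angle (a - (⟪a, b⟫ / ‖b‖ ^ 2) • b)
        (c - (⟪c, b⟫ / ‖b‖ ^ 2) • b)) = K)
    (h3 : Real.cos (InnerProductGeometry.angle (a - (⟪a, c⟫ / ‖c‖ ^ 2) • c)
        (b - (⟪b, c⟫ / ‖c‖ ^ 2) • c)) = K) :
    K ^ 2 < 1 ∧ (K / (1 - K)) ^ 2 < 1 ∧ ⟪a, b⟫ = (K / (1 - K)) * (‖a‖ * ‖b‖) := by
  have ha : a ≠ 0 := by have := h.ne_zero 0; simpa using this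
  have hb : b ≠ 0 := by have := h.ne_zero 1; simpa using this
  have hc : c ≠ 0 := by have := h.ne_zero 2; simpa using this
  have ha0 : (0:ℝ) < ‖a‖ := norm_pos_iff.mpr ha
  have hb0 : (0:ℝ) < ‖b‖ := norm_pos_iff.mpr hb
  have hc0 : (0:ℝ) < ‖c‖ := norm_pos_iff.mpr hc
  set x : ℝ := ⟪b, c⟫ / (‖b‖ * ‖c‖) with hxdef
  set y : ℝ := ⟪a, c⟫ / (‖a‖ * ‖c‖) with hydef
  set z : ℝ := ⟪a, b⟫ / (‖a‖ * ‖b‖) with hzdef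
  have hx2 : x ^ 2 < 1 := inner_div_sq_lt b c (pair23 a b c h)
  have hy2 : y ^ 2 < 1 := inner_div_sq_lt a c (pair13 a b c h)
  have hz2 : z ^ 2 < 1 := inner_div_sq_lt a b (pair12 a b c h)
  set X : ℝ := Real.sqrt (1 - x ^ 2) with hXdef
  set Y : ℝ := Real.sqrt (1 - y ^ 2) with hYdef
  set Z : ℝ := Real.sqrt (1 - z ^ 2) with hZdef
  have hX : X ^ 2 = 1 - x ^ 2 := Real.sq_sqrt (by linarith)
  have hY : Y ^ 2 = 1 - y ^ 2 := Real.sq_sqrt (by linarith)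
  have hZ : Z ^ 2 = 1 - z ^ 2 := Real.sq_sqrt (by linarith)
  have hX0 : 0 < X := Real.sqrt_pos.mpr (by linarith)
  have hY0 : 0 < Y := Real.sqrt_pos.mpr (by linarith)
  have hZ0 : 0 < Z := Real.sqrt_pos.mpr (by linarith)
  have hK2 : K ^ 2 < 1 := h1 ▸ cos_sq_lt_one a b c h
  have hba : ⟪b, a⟫ = ⟪a, b⟫ := real_inner_comm a b
  have hca : ⟪c, a⟫ = ⟪a, c⟫ := real_inner_comm a c
  have hcb : ⟪c, b⟫ = ⟪b, c⟫ := real_inner_comm b c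
  have E1 : K * (Y * Z) = x - y * z := by
    have h0 := dihedral_eq a b c ha hb hc
    rw [h1, ← hxdef, ← hydef, ← hzdef, ← hYdef, ← hZdef] at h0
    exact h0
  have E2 : K * (X * Z) = y - x * z := by
    have h0 := dihedral_eq b a c hb ha hc
    rw [h2, hba, mul_comm ‖b‖ ‖a‖, ← hxdef, ← hydef, ← hzdef, ← hXdef, ← hZdef] at h0
    exact h0
  have E3 : K * (X * Y) = z - x * y := by
    have h0 := dihedral_eq c a b hc ha hb
    rw [h3, hca, hcb, mul_comm ‖c‖ ‖b‖, mul_comm ‖c‖ ‖a‖,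
      ← hxdef, ← hydef, ← hzdef, ← hXdef, ← hYdef] at h0
    exact h0
  have hxy : x = y := key1 x y z K X Y Z hX0 hY0 hZ0 hX hY hZ hK2 E1 E2
  have hzy : z = y := by
    apply key1 z y x K Z Y X hZ0 hY0 hX0 hZ hY hX hK2
    · linear_combination E3
    · linear_combination E2
  have hxz : x = z := by rw [hxy, ← hzy]
  have hyz : y = z := hzy.symm
  have hXZ : X = Z := by rw [hXdef, hZdef, hxz]
  have hYZ : Y = Z := by rw [hYdef, hZdef, hyz]
  have E3' : K * (Z * Z) = z - z * z := by
    rw [hXZ, hYZ] at E3; rw [hxz, hyz] at E3; exact E3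
  have E3'' : K * (1 - z ^ 2) = z - z * z := by rw [← hZ]; linear_combination E3'
  have hfac : (1 - z) * (z - K * (1 + z)) = 0 := by linear_combination - E3''
  have hzlt1 : z < 1 := (abs_lt.mp ((sq_lt_one_iff_abs_lt_one z).mp hz2)).2
  have hK1 : K < 1 := (abs_lt.mp ((sq_lt_one_iff_abs_lt_one K).mp hK2)).2
  have h2f : z - K * (1 + z) = 0 := by
    rcases mul_eq_zero.mp hfac with hh | hh
    · linarith
    · exact hh
  have ht : z = K / (1 - K) := by
    rw [eq_div_iff (by linarith : (1:ℝ) - K ≠ 0)]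
    linear_combination h2f
  refine ⟨hK2, by rw [← ht]; exact hz2, ?_⟩
  rw [← ht, hzdef]
  field_simp

noncomputable def dihedralAngle (p q r s : EuclideanSpace ℝ (Fin 3)) : ℝ :=
  InnerProductGeometry.angle
    ((r - p) - ((inner ℝ (r - p) (q - p) : ℝ) / ‖q - p‖ ^ 2) • (q - p))
    ((s - p) - ((inner ℝ (s - p) (q - p) : ℝ) / ‖q - p‖ ^ 2) • (q - p))

set_option maxHeartbeats 2000000 in
/-- If all six dihedral angles of a nondegenerate Euclidean tetrahedron are equal, then all
six edge lengths are equal, i.e. the tetrahedron is regular. -/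
theorem equal_dihedral_angles_implies_regular (v : Fin 4 → EuclideanSpace ℝ (Fin 3))
    (hnd : AffineIndependent ℝ v) (β : ℝ)
    (hβ : ∀ i j k l : Fin 4, ({i, j, k, l} : Finset (Fin 4)) = Finset.univ →
      dihedralAngle (v i) (v j) (v k) (v l) = β) :
    ∃ a : ℝ, ∀ i j : Fin 4, i ≠ j → dist (v i) (v j) = a := by
  classical
  have hinj : Function.Injective v := hnd.injective
  set K := Real.cos β with hK
  set t := K / (1 - K) with htdef
  have exists_l : ∀ i j k : Fin 4, i ≠ j → i ≠ k → j ≠ k →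
      ∃ l, i ≠ l ∧ j ≠ l ∧ k ≠ l ∧ ({i, j, k, l} : Finset (Fin 4)) = Finset.univ := by
    intro i j k hij hik hjk
    fin_cases i <;> fin_cases j <;> fin_cases k <;>
      first
        | exact absurd rfl hij
        | exact absurd rfl hik
        | exact absurd rfl hjk
        | decide
  have hli : ∀ i j k l : Fin 4, j ≠ i → k ≠ i → l ≠ i → j ≠ k → j ≠ l → k ≠ l →
      LinearIndependent ℝ ![v j - v i, v k - v i, v l - v i] := by
    intro i j k l hji hki hli' hjk hjl hkl
    have h1 := (affineIndependent_iff_linearIndependent_vsub ℝ v i).mp hnd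
    have hfinj : Function.Injective
        (![⟨j, hji⟩, ⟨k, hki⟩, ⟨l, hli'⟩] : Fin 3 → {x : Fin 4 // x ≠ i}) := by
      intro s r hsr
      fin_cases s <;> fin_cases r <;>
        first
          | rfl
          | exact absurd (congrArg Subtype.val hsr) hjk
          | exact absurd (congrArg Subtype.val hsr) hjl
          | exact absurd (congrArg Subtype.val hsr) hkl
          | exact absurd (congrArg Subtype.val hsr).symm hjk
          | exact absurd (congrArg Subtype.val hsr).symm hjl
          | exact absurd (congrArg Subtype.val hsr).symm hkl
    have h2 := h1.comp _ hfinj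
    have h3 : ((fun p : {x : Fin 4 // x ≠ i} => v ↑p -ᵥ v i) ∘
          (![⟨j, hji⟩, ⟨k, hki⟩, ⟨l, hli'⟩] : Fin 3 → {x : Fin 4 // x ≠ i}))
        = ![v j - v i, v k - v i, v l - v i] := by
      funext s; fin_cases s <;> rfl
    rwa [h3] at h2
  have hmain : ∀ i j k : Fin 4, j ≠ i → k ≠ i → j ≠ k →
      ⟪v j - v i, v k - v i⟫ = t * (‖v j - v i‖ * ‖v k - v i‖) ∧ t ^ 2 < 1 := by
    intro i j k hji hki hjk
    obtain ⟨l, hil, hjl, hkl, hu⟩ := exists_l i j k (Ne.symm hji) (Ne.symm hki) hjk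
    have hu2 : ({i, k, j, l} : Finset (Fin 4)) = Finset.univ := by
      rw [← hu]; ext m; simp only [Finset.mem_insert, Finset.mem_singleton]; tauto
    have hu3 : ({i, l, j, k} : Finset (Fin 4)) = Finset.univ := by
      rw [← hu]; ext m; simp only [Finset.mem_insert, Finset.mem_singleton]; tauto
    have hind := hli i j k l hji hki (Ne.symm hil) hjk hjl hkl
    have hd1 := hβ i j k l hu
    have hd2 := hβ i k j l hu2
    have hd3 := hβ i l j k hu3
    simp only [dihedralAngle] at hd1 hd2 hd3
    have hv := vertex (v j - v i) (v k - v i) (v l - v i) hind K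
      (by rw [hd1, hK]) (by rw [hd2, hK]) (by rw [hd3, hK])
    exact ⟨hv.2.2, hv.2.1⟩
  have ht2 : t ^ 2 < 1 := (hmain 0 1 2 (by decide) (by decide) (by decide)).2
  have ht1 : t < 1 := (abs_lt.mp ((sq_lt_one_iff_abs_lt_one t).mp ht2)).2
  have hdist : ∀ i j k : Fin 4, i ≠ j → i ≠ k → j ≠ k → ‖v k - v i‖ = ‖v k - v j‖ := by
    intro i j k hij hik hjk
    have hp : (0:ℝ) < ‖v j - v i‖ := by
      rw [norm_pos_iff, sub_ne_zero]; exact fun h => hij (hinj h).symm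
    have hq : (0:ℝ) < ‖v k - v i‖ := by
      rw [norm_pos_iff, sub_ne_zero]; exact fun h => hik (hinj h).symm
    have hr : (0:ℝ) < ‖v k - v j‖ := by
      rw [norm_pos_iff, sub_ne_zero]; exact fun h => hjk (hinj h).symm
    set p := ‖v j - v i‖ with hpd
    set q := ‖v k - v i‖ with hqd
    set r := ‖v k - v j‖ with hrd
    have e1' := (hmain i j k (Ne.symm hij) (Ne.symm hik) hjk).1
    have e2' := (hmain j i k hij (Ne.symm hjk) hik).1
    have e1 : r ^ 2 = p ^ 2 + q ^ 2 - 2 * (t * (p * q)) := by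
      calc r ^ 2 = ‖(v j - v i) - (v k - v i)‖ ^ 2 := by
            rw [sub_sub_sub_cancel_right, norm_sub_rev]
        _ = p ^ 2 - 2 * ⟪v j - v i, v k - v i⟫ + q ^ 2 := norm_sub_sq_real _ _
        _ = p ^ 2 + q ^ 2 - 2 * (t * (p * q)) := by rw [e1']; ring
    have e2 : q ^ 2 = p ^ 2 + r ^ 2 - 2 * (t * (p * r)) := by
      calc q ^ 2 = ‖(v i - v j) - (v k - v j)‖ ^ 2 := by
            rw [sub_sub_sub_cancel_right, norm_sub_rev]
        _ = ‖v i - v j‖ ^ 2 - 2 * ⟪v i - v j, v k - v j⟫ + ‖v k - v j‖ ^ 2 :=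
            norm_sub_sq_real _ _
        _ = p ^ 2 + r ^ 2 - 2 * (t * (p * r)) := by
            rw [e2', norm_sub_rev (v i) (v j)]; ring
    have htri : p ≤ r + q := by
      calc p = dist (v j) (v i) := (dist_eq_norm _ _).symm
        _ ≤ dist (v j) (v k) + dist (v k) (v i) := dist_triangle _ _ _
        _ = r + q := by
            rw [dist_eq_norm, dist_eq_norm, norm_sub_rev (v j) (v k)]
    have hfac : (r - q) * (r + q - t * p) = 0 := by linear_combination (e1 - e2) / 2
    have hpos : 0 < r + q - t * p := by nlinarith [mul_lt_mul_of_pos_right ht1 hp]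
    rcases mul_eq_zero.mp hfac with h | h
    · linarith
    · linarith
  refine ⟨‖v 1 - v 0‖, ?_⟩
  have a02 : ‖v 2 - v 0‖ = ‖v 1 - v 0‖ := by
    have h := hdist 1 2 0 (by decide) (by decide) (by decide)
    rw [norm_sub_rev (v 0) (v 1), norm_sub_rev (v 0) (v 2)] at h
    exact h.symm
  have a03 : ‖v 3 - v 0‖ = ‖v 1 - v 0‖ := by
    have h := hdist 1 3 0 (by decide) (by decide) (by decide)
    rw [norm_sub_rev (v 0) (v 1), norm_sub_rev (v 0) (v 3)] at h
    exact h.symm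
  have a12 : ‖v 2 - v 1‖ = ‖v 1 - v 0‖ := by
    have h := hdist 0 2 1 (by decide) (by decide) (by decide)
    rw [norm_sub_rev (v 1) (v 2)] at h
    exact h.symm
  have a13 : ‖v 3 - v 1‖ = ‖v 1 - v 0‖ := by
    have h := hdist 0 3 1 (by decide) (by decide) (by decide)
    rw [norm_sub_rev (v 1) (v 3)] at h
    exact h.symm
  have a23 : ‖v 3 - v 2‖ = ‖v 1 - v 0‖ := by
    have h := hdist 0 3 2 (by decide) (by decide) (by decide)
    rw [norm_sub_rev (v 2) (v 3)] at h
    exact h.symm.trans a02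
  intro i j hij
  rw [dist_eq_norm]
  fin_cases i <;> fin_cases j <;>
    first
      | exact absurd rfl hij
      | exact rfl
      | exact a02
      | exact a03
      | exact a12
      | exact a13
      | exact a23
      | (rw [norm_sub_rev]
         first
           | exact rfl
           | exact a02
           | exact a03
           | exact a12
           | exact a13
           | exact a23)
end

section
/- In an equihedral tetrahedron, every face is an acute triangle, i.e., all face angles are strictly less than π/2. -/
open EuclideanGeometry Real

lemma npar' (v : Fin 4 → EuclideanSpace ℝ (Fin 3)) (hnd : AffineIndependent ℝ v)
    (w0 w1 w2 w3 : ℝ) (hs : w0 + w1 + w2 + w3 = 0)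
    (hv : w0 • v 0 + w1 • v 1 + w2 • v 2 + w3 • v 3 = 0)
    (hwi : ¬(w0 = 0)) : False := by
  rw [affineIndependent_iff] at hnd
  exact hwi (hnd Finset.univ ![w0, w1, w2, w3]
    (by simpa [Fin.sum_univ_four] using hs)
    (by simpa [Fin.sum_univ_four] using hv) 0 (Finset.mem_univ _))

lemma key (p a b c : EuclideanSpace ℝ (Fin 3))
    (e1 : dist a b = dist p c) (e2 : dist a c = dist p b) (e3 : dist b c = dist p a)
    (hpar : p + c ≠ a + b) :
    EuclideanGeometry.angle a p b < Real.pi / 2 := by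
  set u : EuclideanSpace ℝ (Fin 3) := a - p with hu
  set w : EuclideanSpace ℝ (Fin 3) := b - p with hw
  set x : EuclideanSpace ℝ (Fin 3) := c - p with hx
  have nuw : ‖u - w‖ = ‖x‖ := by
    have h : a - b = u - w := by rw [hu, hw]; abel
    rw [← h, ← dist_eq_norm, e1, dist_eq_norm, hx, norm_sub_rev]
  have nux : ‖u - x‖ = ‖w‖ := by
    have h : a - c = u - x := by rw [hu, hx]; abel
    rw [← h, ← dist_eq_norm, e2, dist_eq_norm, hw, norm_sub_rev]
  have nwx : ‖w - x‖ = ‖u‖ := by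
    have h : b - c = w - x := by rw [hw, hx]; abel
    rw [← h, ← dist_eq_norm, e3, dist_eq_norm, hu, norm_sub_rev]
  have hne : u + w - x ≠ 0 := by
    intro h0
    apply hpar
    have h1 : a + b - (p + c) = 0 := by rw [← h0, hu, hw, hx]; abel
    exact (sub_eq_zero.mp h1).symm
  have sq : ∀ y z : EuclideanSpace ℝ (Fin 3),
      ‖y - z‖ ^ 2 = ‖y‖ ^ 2 - 2 * inner ℝ y z + ‖z‖ ^ 2 := fun y z => norm_sub_sq_real y z
  have exp1 := sq u w
  have exp2 := sq u x
  have exp3 := sq w x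
  rw [nuw] at exp1; rw [nux] at exp2; rw [nwx] at exp3
  have expbig : ‖u + w - x‖ ^ 2
      = ‖u‖ ^ 2 + ‖w‖ ^ 2 + ‖x‖ ^ 2 + 2 * inner ℝ u w - 2 * inner ℝ u x - 2 * inner ℝ w x := by
    rw [sq (u + w) x, norm_add_sq_real, inner_add_left]
    ring
  have hpos : (0:ℝ) < ‖u + w - x‖ ^ 2 := pow_pos (norm_pos_iff.mpr hne) 2
  have hip : (0:ℝ) < inner ℝ u w := by nlinarith [exp1, exp2, exp3, expbig, hpos]
  have hangle : EuclideanGeometry.angle a p b = InnerProductGeometry.angle u w := by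
    rfl
  rw [hangle, InnerProductGeometry.angle, Real.arccos_lt_pi_div_two]
  have hu0 : u ≠ 0 := fun h => by simp [h, inner_zero_left] at hip
  have hw0 : w ≠ 0 := fun h => by simp [h, inner_zero_right] at hip
  exact div_pos hip (mul_pos (norm_pos_iff.mpr hu0) (norm_pos_iff.mpr hw0))



set_option maxHeartbeats 1000000 in
/-- In a nondegenerate equihedral tetrahedron, every face is an acute triangle: all face
angles are strictly less than `π/2`. -/
theorem equihedral_faces_acute (v : Fin 4 → EuclideanSpace ℝ (Fin 3))
    (hnd : AffineIndependent ℝ v)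
    (h1 : dist (v 0) (v 1) = dist (v 2) (v 3))
    (h2 : dist (v 0) (v 2) = dist (v 1) (v 3))
    (h3 : dist (v 0) (v 3) = dist (v 1) (v 2)) :
    ∀ i j k : Fin 4, i ≠ j → i ≠ k → j ≠ k →
      EuclideanGeometry.angle (v j) (v i) (v k) < Real.pi / 2 := by
  have hall : ∀ m : Fin 4, m = 0 ∨ m = 1 ∨ m = 2 ∨ m = 3 := by decide
  intro i j k hij hik hjk
  rcases hall i with rfl | rfl | rfl | rfl <;>
    rcases hall j with rfl | rfl | rfl | rfl <;>
      rcases hall k with rfl | rfl | rfl | rfl <;>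
        first
          | exact absurd rfl hij
          | exact absurd rfl hik
          | exact absurd rfl hjk
          | skip
  · exact key (v 0) (v 1) (v 2) (v 3) h3.symm h2.symm h1.symm (fun hq => npar' v hnd 1 (-1) (-1) 1 (by norm_num) (by rw [← sub_eq_zero_of_eq hq]; module) (by norm_num))
  · exact key (v 0) (v 1) (v 3) (v 2) h2.symm h3.symm ((dist_comm _ _).trans h1.symm) (fun hq => npar' v hnd 1 (-1) 1 (-1) (by norm_num) (by rw [← sub_eq_zero_of_eq hq]; module) (by norm_num))
  · exact key (v 0) (v 2) (v 1) (v 3) ((dist_comm _ _).trans h3.symm) h1.symm h2.symm (fun hq => npar' v hnd 1 (-1) (-1) 1 (by norm_num) (by rw [← sub_eq_zero_of_eq hq]; module) (by norm_num))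
  · exact key (v 0) (v 2) (v 3) (v 1) h1.symm ((dist_comm _ _).trans h3.symm) ((dist_comm _ _).trans h2.symm) (fun hq => npar' v hnd 1 1 (-1) (-1) (by norm_num) (by rw [← sub_eq_zero_of_eq hq]; module) (by norm_num))
  · exact key (v 0) (v 3) (v 1) (v 2) ((dist_comm _ _).trans h2.symm) ((dist_comm _ _).trans h1.symm) h3.symm (fun hq => npar' v hnd 1 (-1) 1 (-1) (by norm_num) (by rw [← sub_eq_zero_of_eq hq]; module) (by norm_num))
  · exact key (v 0) (v 3) (v 2) (v 1) ((dist_comm _ _).trans h1.symm) ((dist_comm _ _).trans h2.symm) ((dist_comm _ _).trans h3.symm) (fun hq => npar' v hnd 1 1 (-1) (-1) (by norm_num) (by rw [← sub_eq_zero_of_eq hq]; module) (by norm_num))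
  · exact key (v 1) (v 0) (v 2) (v 3) h2 h3 (h1.symm.trans (dist_comm _ _)) (fun hq => npar' v hnd (-1) 1 (-1) 1 (by norm_num) (by rw [← sub_eq_zero_of_eq hq]; module) (by norm_num))
  · exact key (v 1) (v 0) (v 3) (v 2) h3 h2 (((dist_comm _ _).trans h1.symm).trans (dist_comm _ _)) (fun hq => npar' v hnd (-1) 1 1 (-1) (by norm_num) (by rw [← sub_eq_zero_of_eq hq]; module) (by norm_num))
  · exact key (v 1) (v 2) (v 0) (v 3) ((dist_comm _ _).trans h2) (h1.symm.trans (dist_comm _ _)) h3 (fun hq => npar' v hnd (-1) 1 (-1) 1 (by norm_num) (by rw [← sub_eq_zero_of_eq hq]; module) (by norm_num))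
  · exact key (v 1) (v 2) (v 3) (v 0) (h1.symm.trans (dist_comm _ _)) ((dist_comm _ _).trans h2) ((dist_comm _ _).trans h3) (fun hq => npar' v hnd 1 1 (-1) (-1) (by norm_num) (by rw [← sub_eq_zero_of_eq hq]; module) (by norm_num))
  · exact key (v 1) (v 3) (v 0) (v 2) ((dist_comm _ _).trans h3) (((dist_comm _ _).trans h1.symm).trans (dist_comm _ _)) h2 (fun hq => npar' v hnd (-1) 1 1 (-1) (by norm_num) (by rw [← sub_eq_zero_of_eq hq]; module) (by norm_num))
  · exact key (v 1) (v 3) (v 2) (v 0) (((dist_comm _ _).trans h1.symm).trans (dist_comm _ _)) ((dist_comm _ _).trans h3) ((dist_comm _ _).trans h2) (fun hq => npar' v hnd 1 1 (-1) (-1) (by norm_num) (by rw [← sub_eq_zero_of_eq hq]; module) (by norm_num))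
  · exact key (v 2) (v 0) (v 1) (v 3) h1 (h3.trans (dist_comm _ _)) (h2.symm.trans (dist_comm _ _)) (fun hq => npar' v hnd (-1) (-1) 1 1 (by norm_num) (by rw [← sub_eq_zero_of_eq hq]; module) (by norm_num))
  · exact key (v 2) (v 0) (v 3) (v 1) (h3.trans (dist_comm _ _)) h1 (((dist_comm _ _).trans h2.symm).trans (dist_comm _ _)) (fun hq => npar' v hnd (-1) 1 1 (-1) (by norm_num) (by rw [← sub_eq_zero_of_eq hq]; module) (by norm_num))
  · exact key (v 2) (v 1) (v 0) (v 3) ((dist_comm _ _).trans h1) (h2.symm.trans (dist_comm _ _)) (h3.trans (dist_comm _ _)) (fun hq => npar' v hnd (-1) (-1) 1 1 (by norm_num) (by rw [← sub_eq_zero_of_eq hq]; module) (by norm_num))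
  · exact key (v 2) (v 1) (v 3) (v 0) (h2.symm.trans (dist_comm _ _)) ((dist_comm _ _).trans h1) (((dist_comm _ _).trans h3).trans (dist_comm _ _)) (fun hq => npar' v hnd 1 (-1) 1 (-1) (by norm_num) (by rw [← sub_eq_zero_of_eq hq]; module) (by norm_num))
  · exact key (v 2) (v 3) (v 0) (v 1) (((dist_comm _ _).trans h3).trans (dist_comm _ _)) (((dist_comm _ _).trans h2.symm).trans (dist_comm _ _)) h1 (fun hq => npar' v hnd (-1) 1 1 (-1) (by norm_num) (by rw [← sub_eq_zero_of_eq hq]; module) (by norm_num))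
  · exact key (v 2) (v 3) (v 1) (v 0) (((dist_comm _ _).trans h2.symm).trans (dist_comm _ _)) (((dist_comm _ _).trans h3).trans (dist_comm _ _)) ((dist_comm _ _).trans h1) (fun hq => npar' v hnd 1 (-1) 1 (-1) (by norm_num) (by rw [← sub_eq_zero_of_eq hq]; module) (by norm_num))
  · exact key (v 3) (v 0) (v 1) (v 2) (h1.trans (dist_comm _ _)) (h2.trans (dist_comm _ _)) (h3.symm.trans (dist_comm _ _)) (fun hq => npar' v hnd (-1) (-1) 1 1 (by norm_num) (by rw [← sub_eq_zero_of_eq hq]; module) (by norm_num))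
  · exact key (v 3) (v 0) (v 2) (v 1) (h2.trans (dist_comm _ _)) (h1.trans (dist_comm _ _)) (((dist_comm _ _).trans h3.symm).trans (dist_comm _ _)) (fun hq => npar' v hnd (-1) 1 (-1) 1 (by norm_num) (by rw [← sub_eq_zero_of_eq hq]; module) (by norm_num))
  · exact key (v 3) (v 1) (v 0) (v 2) (((dist_comm _ _).trans h1).trans (dist_comm _ _)) (h3.symm.trans (dist_comm _ _)) (h2.trans (dist_comm _ _)) (fun hq => npar' v hnd (-1) (-1) 1 1 (by norm_num) (by rw [← sub_eq_zero_of_eq hq]; module) (by norm_num))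
  · exact key (v 3) (v 1) (v 2) (v 0) (h3.symm.trans (dist_comm _ _)) (((dist_comm _ _).trans h1).trans (dist_comm _ _)) (((dist_comm _ _).trans h2).trans (dist_comm _ _)) (fun hq => npar' v hnd 1 (-1) (-1) 1 (by norm_num) (by rw [← sub_eq_zero_of_eq hq]; module) (by norm_num))
  · exact key (v 3) (v 2) (v 0) (v 1) (((dist_comm _ _).trans h2).trans (dist_comm _ _)) (((dist_comm _ _).trans h3.symm).trans (dist_comm _ _)) (h1.trans (dist_comm _ _)) (fun hq => npar' v hnd (-1) 1 (-1) 1 (by norm_num) (by rw [← sub_eq_zero_of_eq hq]; module) (by norm_num))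
  · exact key (v 3) (v 2) (v 1) (v 0) (((dist_comm _ _).trans h3.symm).trans (dist_comm _ _)) (((dist_comm _ _).trans h2).trans (dist_comm _ _)) (((dist_comm _ _).trans h1).trans (dist_comm _ _)) (fun hq => npar' v hnd 1 (-1) (-1) 1 (by norm_num) (by rw [← sub_eq_zero_of_eq hq]; module) (by norm_num))
end

section
/- Given positive background edge lengths L_ij on a tetrahedron 1234, there exist conformal factors f_1, f_2, f_3, f_4 ∈ R, unique up to adding a common constant, such that the conformally deformed lengths ℓ_ij = exp((f_i+f_j)/2)·L_ij satisfy ℓ_12 = ℓ_34, ℓ_13 = ℓ_24, and ℓ_14 = ℓ_23. Explicitly, one can take f_4 = 0, e^{f_1/2} = sqrt(L_24·L_34/(L_12·L_13)), e^{f_2/2} = sqrt(L_14·L_34/(L_23·L_12)), e^{f_3/2} = sqrt(L_14·L_24/(L_13·L_23)). -/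
private lemma eq_of_sq_eq' {x y : ℝ} (hx : 0 ≤ x) (hy : 0 ≤ y) (h : x ^ 2 = y ^ 2) :
    x = y := by
  rw [← Real.sqrt_sq hx, ← Real.sqrt_sq hy, h]

private lemma exp_half_log {x : ℝ} (hx : 0 < x) :
    Real.exp (Real.log x / 2) = Real.sqrt x := by
  rw [Real.sqrt_eq_rpow, Real.rpow_def_of_pos hx]
  ring_nf

/-- Given positive background edge lengths `L i j` on a tetrahedron (vertices `0,1,2,3`),
there exist conformal factors, unique up to an additive constant, making the deformed
metric `ℓ_ij = exp((f_i+f_j)/2)·L_ij` equihedral; explicitly one can take `f 3 = 0`,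
`exp (f 0 / 2) = sqrt (L13·L23/(L01·L02))`, `exp (f 1 / 2) = sqrt (L03·L23/(L12·L01))`,
`exp (f 2 / 2) = sqrt (L03·L13/(L02·L12))`. -/
theorem equihedral_in_every_conformal_class (L : Fin 4 → Fin 4 → ℝ)
    (hL : ∀ i j, 0 < L i j) (hsym : ∀ i j, L i j = L j i) :
    ∃ f : Fin 4 → ℝ,
      (f 3 = 0 ∧
        Real.exp (f 0 / 2) = Real.sqrt (L 1 3 * L 2 3 / (L 0 1 * L 0 2)) ∧
        Real.exp (f 1 / 2) = Real.sqrt (L 0 3 * L 2 3 / (L 1 2 * L 0 1)) ∧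
        Real.exp (f 2 / 2) = Real.sqrt (L 0 3 * L 1 3 / (L 0 2 * L 1 2))) ∧
      (Real.exp ((f 0 + f 1) / 2) * L 0 1 = Real.exp ((f 2 + f 3) / 2) * L 2 3 ∧
        Real.exp ((f 0 + f 2) / 2) * L 0 2 = Real.exp ((f 1 + f 3) / 2) * L 1 3 ∧
        Real.exp ((f 0 + f 3) / 2) * L 0 3 = Real.exp ((f 1 + f 2) / 2) * L 1 2) ∧
      (∀ g : Fin 4 → ℝ,
        (Real.exp ((g 0 + g 1) / 2) * L 0 1 = Real.exp ((g 2 + g 3) / 2) * L 2 3 ∧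
          Real.exp ((g 0 + g 2) / 2) * L 0 2 = Real.exp ((g 1 + g 3) / 2) * L 1 3 ∧
          Real.exp ((g 0 + g 3) / 2) * L 0 3 = Real.exp ((g 1 + g 2) / 2) * L 1 2) →
        ∃ c : ℝ, ∀ i, g i = f i + c) := by
  have h01 := hL 0 1; have h02 := hL 0 2; have h03 := hL 0 3
  have h12 := hL 1 2; have h13 := hL 1 3; have h23 := hL 2 3
  set a0 : ℝ := L 1 3 * L 2 3 / (L 0 1 * L 0 2) with ha0
  set a1 : ℝ := L 0 3 * L 2 3 / (L 1 2 * L 0 1) with ha1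
  set a2 : ℝ := L 0 3 * L 1 3 / (L 0 2 * L 1 2) with ha2
  have ha0p : 0 < a0 := by positivity
  have ha1p : 0 < a1 := by positivity
  have ha2p : 0 < a2 := by positivity
  refine ⟨![Real.log a0, Real.log a1, Real.log a2, 0], ?_, ?_, ?_⟩
  · refine ⟨rfl, ?_, ?_, ?_⟩
    · show Real.exp (Real.log a0 / 2) = Real.sqrt a0
      exact exp_half_log ha0p
    · show Real.exp (Real.log a1 / 2) = Real.sqrt a1
      exact exp_half_log ha1p
    · show Real.exp (Real.log a2 / 2) = Real.sqrt a2
      exact exp_half_log ha2p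
  · have split : ∀ x y : ℝ, Real.exp ((x + y) / 2)
        = Real.exp (x / 2) * Real.exp (y / 2) := by
      intro x y; rw [← Real.exp_add]; congr 1; ring
    have e0 : Real.exp (Real.log a0 / 2) = Real.sqrt a0 := exp_half_log ha0p
    have e1 : Real.exp (Real.log a1 / 2) = Real.sqrt a1 := exp_half_log ha1p
    have e2 : Real.exp (Real.log a2 / 2) = Real.sqrt a2 := exp_half_log ha2p
    have s0 := Real.sq_sqrt ha0p.le
    have s1 := Real.sq_sqrt ha1p.le
    have s2 := Real.sq_sqrt ha2p.le
    have sq0 := Real.sqrt_nonneg a0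
    have sq1 := Real.sqrt_nonneg a1
    have sq2 := Real.sqrt_nonneg a2
    refine ⟨?_, ?_, ?_⟩
    · show Real.exp ((Real.log a0 + Real.log a1) / 2) * L 0 1
        = Real.exp ((Real.log a2 + 0) / 2) * L 2 3
      rw [split, split, e0, e1, e2]
      simp only [zero_div, Real.exp_zero, mul_one]
      apply eq_of_sq_eq' (by positivity) (by positivity)
      have : (Real.sqrt a0 * Real.sqrt a1 * L 0 1) ^ 2
          = a0 * a1 * L 0 1 ^ 2 := by rw [mul_pow, mul_pow, s0, s1]
      rw [this, mul_pow, s2, ha0, ha1, ha2]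
      field_simp
    · show Real.exp ((Real.log a0 + Real.log a2) / 2) * L 0 2
        = Real.exp ((Real.log a1 + 0) / 2) * L 1 3
      rw [split, split, e0, e1, e2]
      simp only [zero_div, Real.exp_zero, mul_one]
      apply eq_of_sq_eq' (by positivity) (by positivity)
      have : (Real.sqrt a0 * Real.sqrt a2 * L 0 2) ^ 2
          = a0 * a2 * L 0 2 ^ 2 := by rw [mul_pow, mul_pow, s0, s2]
      rw [this, mul_pow, s1, ha0, ha1, ha2]
      field_simp
    · show Real.exp ((Real.log a0 + 0) / 2) * L 0 3
        = Real.exp ((Real.log a1 + Real.log a2) / 2) * L 1 2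
      rw [split, split, e0, e1, e2]
      simp only [zero_div, Real.exp_zero, mul_one]
      apply eq_of_sq_eq' (by positivity) (by positivity)
      have : (Real.sqrt a1 * Real.sqrt a2 * L 1 2) ^ 2
          = a1 * a2 * L 1 2 ^ 2 := by rw [mul_pow, mul_pow, s1, s2]
      rw [this, mul_pow, s0, ha0, ha1, ha2]
      field_simp
  · rintro g ⟨hg1, hg2, hg3⟩
    set A : ℝ := Real.exp (g 0 / 2) with hA
    set B : ℝ := Real.exp (g 1 / 2) with hB
    set C : ℝ := Real.exp (g 2 / 2) with hC
    set D : ℝ := Real.exp (g 3 / 2) with hD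
    have hAp : 0 < A := Real.exp_pos _
    have hBp : 0 < B := Real.exp_pos _
    have hCp : 0 < C := Real.exp_pos _
    have hDp : 0 < D := Real.exp_pos _
    have split : ∀ x y : ℝ, Real.exp ((x + y) / 2)
        = Real.exp (x / 2) * Real.exp (y / 2) := by
      intro x y; rw [← Real.exp_add]; congr 1; ring
    simp only [split] at hg1 hg2 hg3
    -- hg1 : A * B * L01 = C * D * L23
    -- hg2 : A * C * L02 = B * D * L13
    -- hg3 : A * D * L03 = B * C * L12
    have hexp : ∀ i, Real.exp (g i) = Real.exp (g i / 2) ^ 2 := by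
      intro i; rw [sq, ← Real.exp_add]; congr 1; ring
    have kA : A ^ 2 * (L 0 1 * L 0 2) = D ^ 2 * (L 1 3 * L 2 3) := by
      have hp : (A * B * L 0 1) * (A * C * L 0 2)
          = (C * D * L 2 3) * (B * D * L 1 3) := by rw [hg1, hg2]
      have hc : (A ^ 2 * (L 0 1 * L 0 2)) * (B * C)
          = (D ^ 2 * (L 1 3 * L 2 3)) * (B * C) := by linear_combination hp
      exact mul_right_cancel₀ (by positivity) hc
    have kB : B ^ 2 * (L 1 2 * L 0 1) = D ^ 2 * (L 0 3 * L 2 3) := by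
      have hp : (A * B * L 0 1) * (B * C * L 1 2)
          = (C * D * L 2 3) * (A * D * L 0 3) := by rw [hg1, hg3]
      have hc : (B ^ 2 * (L 1 2 * L 0 1)) * (A * C)
          = (D ^ 2 * (L 0 3 * L 2 3)) * (A * C) := by linear_combination hp
      exact mul_right_cancel₀ (by positivity) hc
    have kC : C ^ 2 * (L 0 2 * L 1 2) = D ^ 2 * (L 0 3 * L 1 3) := by
      have hp : (A * C * L 0 2) * (B * C * L 1 2)
          = (B * D * L 1 3) * (A * D * L 0 3) := by rw [hg2, hg3]
      have hc : (C ^ 2 * (L 0 2 * L 1 2)) * (A * B)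
          = (D ^ 2 * (L 0 3 * L 1 3)) * (A * B) := by linear_combination hp
      exact mul_right_cancel₀ (by positivity) hc
    refine ⟨g 3, ?_⟩
    have goal0 : g 0 = Real.log a0 + g 3 := by
      rw [← Real.exp_eq_exp, Real.exp_add, Real.exp_log ha0p, hexp, hexp, ← hA, ← hD,
        ha0]
      field_simp
      linear_combination kA
    have goal1 : g 1 = Real.log a1 + g 3 := by
      rw [← Real.exp_eq_exp, Real.exp_add, Real.exp_log ha1p, hexp, hexp, ← hB, ← hD,
        ha1]
      field_simp
      linear_combination kB
    have goal2 : g 2 = Real.log a2 + g 3 := by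
      rw [← Real.exp_eq_exp, Real.exp_add, Real.exp_log ha2p, hexp, hexp, ← hC, ← hD,
        ha2]
      field_simp
      linear_combination kC
    intro i
    fin_cases i
    · simpa using goal0
    · simpa using goal1
    · simpa using goal2
    · simp
end

section
/- For an ε-fat piecewise flat three-manifold with maximal edge degree D, the volume-normalized Einstein-Hilbert-Regge functional satisfies VEHR ≥ min{0, 2π - πD}·ε^{-1/3}. -/
/-- For an `ε`-fat piecewise flat three-manifold with maximal edge degree `D`, the
volume-normalized Einstein-Hilbert-Regge functional satisfies
`VEHR ≥ min {0, 2π - πD} · ε^(-1/3)`. Here `E` is the set of edges, `ℓ e > 0` the edge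
lengths, `β e i ∈ (0,π)` the dihedral angles at `e`, `deg e ≤ D` the edge degrees,
`V > 0` the total volume, and fatness means `V / (Σ ℓ_e)³ ≥ ε > 0`. -/
theorem VEHR_lower_bound {E : Type*} [Fintype E] [Nonempty E]
    (ℓ : E → ℝ) (hℓ : ∀ e, 0 < ℓ e)
    (deg : E → ℕ) (β : (e : E) → Fin (deg e) → ℝ)
    (hβ : ∀ e i, 0 < β e i ∧ β e i < Real.pi)
    (D : ℕ) (hD : ∀ e, deg e ≤ D)
    (V : ℝ) (hV : 0 < V) (ε : ℝ) (hε : 0 < ε)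
    (hfat : ε ≤ V / (∑ e, ℓ e) ^ 3) :
    min 0 (2 * Real.pi - Real.pi * D) * ε ^ (-(1 : ℝ) / 3) ≤
      (∑ e, (2 * Real.pi - ∑ i, β e i) * ℓ e) / V ^ ((1 : ℝ) / 3) := by
  set L : ℝ := ∑ e, ℓ e with hLdef
  have hL : 0 < L := Finset.sum_pos (fun e _ => hℓ e) Finset.univ_nonempty
  set c : ℝ := 2 * Real.pi - Real.pi * D with hc
  have hW : (0 : ℝ) < V ^ ((1 : ℝ) / 3) := Real.rpow_pos_of_pos hV _
  -- termwise lower bound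
  have hterm : ∀ e, c * ℓ e ≤ (2 * Real.pi - ∑ i, β e i) * ℓ e := by
    intro e
    apply mul_le_mul_of_nonneg_right _ (hℓ e).le
    have hsum : (∑ i, β e i) ≤ Real.pi * D := by
      calc (∑ i, β e i) ≤ ∑ _i : Fin (deg e), Real.pi :=
            Finset.sum_le_sum fun i _ => (hβ e i).2.le
        _ = (deg e : ℝ) * Real.pi := by simp [mul_comm]
        _ ≤ Real.pi * D := by
            rw [mul_comm]
            exact mul_le_mul_of_nonneg_left (by exact_mod_cast hD e) Real.pi_pos.le
    linarith
  have hEHR : c * L ≤ ∑ e, (2 * Real.pi - ∑ i, β e i) * ℓ e := by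
    rw [hLdef, Finset.mul_sum]
    exact Finset.sum_le_sum fun e _ => hterm e
  rcases le_or_gt 0 c with hc0 | hc0
  · rw [min_eq_left hc0]
    rw [zero_mul]
    apply div_nonneg _ hW.le
    exact le_trans (mul_nonneg hc0 hL.le) hEHR
  · rw [min_eq_right hc0.le]
    rw [le_div_iff₀ hW]
    refine le_trans ?_ hEHR
    rw [mul_assoc]
    apply mul_le_mul_of_nonpos_left _ hc0.le
    -- need L ≤ ε^(-1/3) * V^(1/3)
    have hL3 : L ^ 3 ≤ V * ε⁻¹ := by
      rw [le_div_iff₀ (by positivity)] at hfat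
      rw [← div_eq_mul_inv, le_div_iff₀ hε]
      nlinarith
    have : L = (L ^ 3) ^ ((1 : ℝ) / 3) := by
      rw [← Real.rpow_natCast L 3, ← Real.rpow_mul hL.le]
      norm_num
    rw [this]
    calc (L ^ 3) ^ ((1 : ℝ) / 3) ≤ (V * ε⁻¹) ^ ((1 : ℝ) / 3) :=
          Real.rpow_le_rpow (by positivity) hL3 (by norm_num)
      _ = ε ^ (-(1 : ℝ) / 3) * V ^ ((1 : ℝ) / 3) := by
          rw [Real.mul_rpow hV.le (by positivity), Real.inv_rpow hε.le,
            ← Real.rpow_neg hε.le, mul_comm, neg_div]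
end

section
/- Let H be the 6×6 symmetric matrix with diagonal entries b (positions 1,6) and d (positions 2,3,4,5), with H_{16} = H_{61} = e, H_{25} = H_{52} = H_{34} = H_{43} = f, entries a in positions (1,j) and (6,j) for j ∈ {2,3,4,5} (and symmetrically), and entries c in the remaining off-diagonal positions among {2,3,4,5}. Suppose (t,1,1,1,1,t) is in the kernel of H for some t > 0. Then the vectors (1,0,0,0,0,-1); (0,1,0,0,-1,0) and (0,0,1,-1,0,0); (0,1,-1,-1,1,0); and (1/t,-1/2,-1/2,-1/2,-1/2,1/t) are eigenvectors of H with eigenvalues b - e; d - f; -4c - 2ta; and -(2t + 4/t)a respectively. -/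
theorem cons_val_five' {α : Type*} {m : ℕ} (x : α)
    (u : Fin m.succ.succ.succ.succ.succ → α) :
    Matrix.vecCons x u 5
      = Matrix.vecHead (Matrix.vecTail (Matrix.vecTail (Matrix.vecTail (Matrix.vecTail u)))) :=
  rfl

/-- The symmetric `6×6` matrix arising as the Hessian of a normalized EHR functional along
the family `ℓ(t) = (t,1,1,1,1,t)`. -/
def hessMatrix (a b c d e f : ℝ) : Matrix (Fin 6) (Fin 6) ℝ :=
  !![b, a, a, a, a, e;
     a, d, c, c, f, a;
     a, c, d, f, c, a;
     a, c, f, d, c, a;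
     a, f, c, c, d, a;
     e, a, a, a, a, b]

/-- If `(t,1,1,1,1,t)` (with `t > 0`) lies in the kernel of the matrix `hessMatrix`,
then the listed vectors are eigenvectors with eigenvalues `b - e`, `d - f`, `d - f`,
`-4c - 2ta` and `-(2t + 4/t)a` respectively. -/
theorem hessMatrix_eigenvectors (a b c d e f t : ℝ) (ht : 0 < t)
    (hker : (hessMatrix a b c d e f).mulVec ![t, 1, 1, 1, 1, t] = 0) :
    (hessMatrix a b c d e f).mulVec ![1, 0, 0, 0, 0, -1]
        = (b - e) • ![1, 0, 0, 0, 0, -1] ∧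
    (hessMatrix a b c d e f).mulVec ![0, 1, 0, 0, -1, 0]
        = (d - f) • ![0, 1, 0, 0, -1, 0] ∧
    (hessMatrix a b c d e f).mulVec ![0, 0, 1, -1, 0, 0]
        = (d - f) • ![0, 0, 1, -1, 0, 0] ∧
    (hessMatrix a b c d e f).mulVec ![0, 1, -1, -1, 1, 0]
        = (-4 * c - 2 * t * a) • ![0, 1, -1, -1, 1, 0] ∧
    (hessMatrix a b c d e f).mulVec ![1 / t, -1 / 2, -1 / 2, -1 / 2, -1 / 2, 1 / t]
        = (-(2 * t + 4 / t) * a) • ![1 / t, -1 / 2, -1 / 2, -1 / 2, -1 / 2, 1 / t] := by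
  have h0 := congrFun hker 0
  have h1 := congrFun hker 1
  simp [hessMatrix, Matrix.mulVec, dotProduct, Fin.sum_univ_succ,
    Matrix.cons_val_succ, cons_val_five', Matrix.vecHead, Matrix.vecTail] at h0 h1
  have ht' : t ≠ 0 := ne_of_gt ht
  have p0 : ∀ k : ℕ, (b * t + (a + (a + (a + (a + e * t))))) * t ^ k = 0 := by
    intro k; rw [h0]; ring
  have p1 : ∀ k : ℕ, (a * t + (d + (c + (c + (f + a * t))))) * t ^ k = 0 := by
    intro k; rw [h1]; ring
  refine ⟨?_, ?_, ?_, ?_, ?_⟩ <;>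
    funext i <;> fin_cases i <;>
    simp [hessMatrix, Matrix.mulVec, dotProduct, Fin.sum_univ_succ,
      Matrix.cons_val_succ, cons_val_five', Matrix.vecHead, Matrix.vecTail] <;>
    first
      | rfl
      | linarith [h0, h1]
      | (field_simp
         linarith [h0, h1, p0 1, p0 2, p0 3, p0 4, p1 1, p1 2, p1 3, p1 4])
end

section
/- On the double tetrahedron with the family of equihedral metrics ℓ(t) = (t,1,1,1,1,t) for t ∈ (1,√2), the total curvature EHR(t) = 2(2π - 2β_12(t))t + 4(2π - 2β_13(t)) tends to 8π and the volume tends to 0 as t → √2⁻; hence VEHR(t) = EHR(t)/V(t)^{1/3} → +∞, so VEHR is unbounded above on the double tetrahedron. -/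
noncomputable def edgeK (v : Fin 4 → EuclideanSpace ℝ (Fin 3)) (i j k l : Fin 4) : ℝ :=
  (2 * Real.pi - 2 * dihedralAngle (v i) (v j) (v k) (v l)) * dist (v i) (v j)

/-- Total curvature `EHR = Σ_e (2π - 2β_e) ℓ_e` of the double tetrahedron generated by the
tetrahedron on `v 0, v 1, v 2, v 3`. -/
noncomputable def EHR (v : Fin 4 → EuclideanSpace ℝ (Fin 3)) : ℝ :=
  edgeK v 0 1 2 3 + edgeK v 0 2 1 3 + edgeK v 0 3 1 2 +
    edgeK v 1 2 0 3 + edgeK v 1 3 0 2 + edgeK v 2 3 0 1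

noncomputable def tetraVolume (v : Fin 4 → EuclideanSpace ℝ (Fin 3)) : ℝ :=
  |Matrix.det (Matrix.of fun i j : Fin 3 => (v i.succ - v 0) j)| / 6

/- ### Auxiliary lemmas -/

open Real Matrix

lemma inner_from_dist (p q r : EuclideanSpace ℝ (Fin 3)) :
    (inner ℝ (q - p) (r - p) : ℝ) = (dist p q ^ 2 + dist p r ^ 2 - dist q r ^ 2) / 2 := by
  have h := norm_sub_sq_real (q - p) (r - p)
  have e1 : dist p q = ‖q - p‖ := by rw [dist_eq_norm']
  have e2 : dist p r = ‖r - p‖ := by rw [dist_eq_norm']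
  have e3 : dist q r = ‖(q - p) - (r - p)‖ := by rw [dist_eq_norm]; congr 1; abel
  rw [e1, e2, e3]; linarith

lemma sum_eq_inner (x y : EuclideanSpace ℝ (Fin 3)) :
    ∑ k, x k * y k = (inner ℝ x y : ℝ) := by
  simp [PiLp.inner_apply, RCLike.inner_apply, starRingEnd_apply]
  exact Finset.sum_congr rfl fun _ _ => mul_comm _ _

lemma dihedral_formula (p q r s : EuclideanSpace ℝ (Fin 3)) (du dx dy ix iy ixy : ℝ)
    (hdu : 0 < du)
    (hu : ‖q - p‖ ^ 2 = du) (hx : ‖r - p‖ ^ 2 = dx) (hy : ‖s - p‖ ^ 2 = dy)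
    (hix : (inner ℝ (r - p) (q - p) : ℝ) = ix)
    (hiy : (inner ℝ (s - p) (q - p) : ℝ) = iy)
    (hixy : (inner ℝ (r - p) (s - p) : ℝ) = ixy) :
    dihedralAngle p q r s = Real.arccos ((ixy - ix * iy / du) /
      (Real.sqrt (dx - ix ^ 2 / du) * Real.sqrt (dy - iy ^ 2 / du))) := by
  set u := q - p
  set x := r - p
  set y := s - p
  have hdu' : du ≠ 0 := ne_of_gt hdu
  have hxx : ‖x - (ix / du) • u‖ ^ 2 = dx - ix ^ 2 / du := by
    rw [norm_sub_sq_real, real_inner_smul_right, norm_smul]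
    rw [mul_pow, Real.norm_eq_abs, sq_abs]
    rw [hix, hu, hx]
    field_simp
    ring
  have hyy : ‖y - (iy / du) • u‖ ^ 2 = dy - iy ^ 2 / du := by
    rw [norm_sub_sq_real, real_inner_smul_right, norm_smul]
    rw [mul_pow, Real.norm_eq_abs, sq_abs]
    rw [hiy, hu, hy]
    field_simp
    ring
  have hxy : (inner ℝ (x - (ix / du) • u) (y - (iy / du) • u) : ℝ) = ixy - ix * iy / du := by
    simp only [inner_sub_left, inner_sub_right, real_inner_smul_left, real_inner_smul_right,
      real_inner_self_eq_norm_sq]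
    rw [(real_inner_comm y u).trans hiy, hix, hixy, hu]
    field_simp
    ring
  rw [dihedralAngle, InnerProductGeometry.angle, hu, hix, hiy, hxy]
  congr 1
  rw [← Real.sqrt_sq (norm_nonneg (x - (ix / du) • u)), ← Real.sqrt_sq (norm_nonneg (y - (iy / du) • u)), hxx, hyy]

lemma norm_sq_of_dist {p q : EuclideanSpace ℝ (Fin 3)} {a : ℝ} (h : dist p q = a) :
    ‖q - p‖ ^ 2 = a ^ 2 := by rw [← dist_eq_norm', h]

lemma angle_t_edge {t : ℝ} (h1 : 1 < t) (h2 : t ^ 2 < 2) (p q r s : EuclideanSpace ℝ (Fin 3))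
    (hpq : dist p q = t) (hpr : dist p r = 1) (hps : dist p s = 1)
    (hqr : dist q r = 1) (hqs : dist q s = 1) (hrs : dist r s = t) :
    dihedralAngle p q r s = Real.arccos ((4 - 3 * t ^ 2) / (4 - t ^ 2)) := by
  have ht0 : 0 < t := lt_trans one_pos h1
  have hs1 : 1 < t ^ 2 := by nlinarith
  have hu : ‖q - p‖ ^ 2 = t ^ 2 := by simpa using norm_sq_of_dist hpq
  have hx : ‖r - p‖ ^ 2 = 1 := by simpa using norm_sq_of_dist hpr
  have hy : ‖s - p‖ ^ 2 = 1 := by simpa using norm_sq_of_dist hps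
  have hix : (inner ℝ (r - p) (q - p) : ℝ) = t ^ 2 / 2 := by
    rw [inner_from_dist p r q, hpr, hpq, dist_comm r q, hqr]; ring
  have hiy : (inner ℝ (s - p) (q - p) : ℝ) = t ^ 2 / 2 := by
    rw [inner_from_dist p s q, hps, hpq, dist_comm s q, hqs]; ring
  have hixy : (inner ℝ (r - p) (s - p) : ℝ) = 1 - t ^ 2 / 2 := by
    rw [inner_from_dist p r s, hpr, hps, hrs]; ring
  rw [dihedral_formula p q r s (t ^ 2) 1 1 (t ^ 2 / 2) (t ^ 2 / 2) (1 - t ^ 2 / 2)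
    (by positivity) hu hx hy hix hiy hixy]
  congr 1
  have e : 1 - (t ^ 2 / 2) ^ 2 / t ^ 2 = 1 - t ^ 2 / 4 := by field_simp; ring
  rw [e, Real.mul_self_sqrt (by linarith)]
  rw [div_eq_div_iff (by nlinarith) (by nlinarith)]
  field_simp
  ring

lemma angle_unit_edge {t : ℝ} (h1 : 1 < t) (h2 : t ^ 2 < 2) (p q r s : EuclideanSpace ℝ (Fin 3))
    (hpq : dist p q = 1) (hpr : dist p r = t) (hps : dist p s = 1)
    (hqr : dist q r = 1) (hqs : dist q s = t) (hrs : dist r s = 1) :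
    dihedralAngle p q r s = Real.arccos (t ^ 2 / (4 - t ^ 2)) := by
  have ht0 : 0 < t := lt_trans one_pos h1
  have hs1 : 1 < t ^ 2 := by nlinarith
  have hu : ‖q - p‖ ^ 2 = 1 := by simpa using norm_sq_of_dist hpq
  have hx : ‖r - p‖ ^ 2 = t ^ 2 := by simpa using norm_sq_of_dist hpr
  have hy : ‖s - p‖ ^ 2 = 1 := by simpa using norm_sq_of_dist hps
  have hix : (inner ℝ (r - p) (q - p) : ℝ) = t ^ 2 / 2 := by
    rw [inner_from_dist p r q, hpr, hpq, dist_comm r q, hqr]; ring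
  have hiy : (inner ℝ (s - p) (q - p) : ℝ) = 1 - t ^ 2 / 2 := by
    rw [inner_from_dist p s q, hps, hpq, dist_comm s q, hqs]; ring
  have hixy : (inner ℝ (r - p) (s - p) : ℝ) = t ^ 2 / 2 := by
    rw [inner_from_dist p r s, hpr, hps, hrs]; ring
  rw [dihedral_formula p q r s 1 (t ^ 2) 1 (t ^ 2 / 2) (1 - t ^ 2 / 2) (t ^ 2 / 2)
    one_pos hu hx hy hix hiy hixy]
  congr 1
  have e1 : t ^ 2 - (t ^ 2 / 2) ^ 2 / 1 = t ^ 2 - t ^ 4 / 4 := by ring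
  have e2 : 1 - (1 - t ^ 2 / 2) ^ 2 / 1 = t ^ 2 - t ^ 4 / 4 := by ring
  have hpos : (0 : ℝ) < t ^ 2 - t ^ 4 / 4 := by nlinarith
  rw [e1, e2, Real.mul_self_sqrt hpos.le]
  rw [div_eq_div_iff (by nlinarith) (by nlinarith)]
  ring

lemma volume_formula {t : ℝ} (h1 : 1 < t) (h2 : t ^ 2 < 2) (w : Fin 4 → EuclideanSpace ℝ (Fin 3))
    (d01 : dist (w 0) (w 1) = t) (d23 : dist (w 2) (w 3) = t) (d02 : dist (w 0) (w 2) = 1)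
    (d03 : dist (w 0) (w 3) = 1) (d12 : dist (w 1) (w 2) = 1) (d13 : dist (w 1) (w 3) = 1) :
    tetraVolume w = t ^ 2 * Real.sqrt (1 - t ^ 2 / 2) / 6 := by
  have ht0 : 0 < t := lt_trans one_pos h1
  set M := Matrix.of fun i j : Fin 3 => (w i.succ - w 0) j with hM
  have key : ∀ i j : Fin 3, (M * Mᵀ) i j = (inner ℝ (w i.succ - w 0) (w j.succ - w 0) : ℝ) := by
    intro i j
    rw [Matrix.mul_apply, ← sum_eq_inner]
    simp [hM]
  have hMMt : M * Mᵀ =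
      !![t ^ 2, t ^ 2 / 2, t ^ 2 / 2; t ^ 2 / 2, 1, 1 - t ^ 2 / 2; t ^ 2 / 2, 1 - t ^ 2 / 2, 1] := by
    ext i j
    fin_cases i <;> fin_cases j <;>
      simp only [key] <;>
      rw [inner_from_dist] <;>
      norm_num [Fin.succ, show (⟨2, by norm_num⟩ : Fin 4) = 2 from rfl,
        show (⟨3, by norm_num⟩ : Fin 4) = 3 from rfl, d01, d02, d03, d12, d13, d23,
        dist_comm (w 2) (w 1), dist_comm (w 3) (w 1), dist_comm (w 3) (w 2)] <;>
      ring
  have hdet2 : M.det ^ 2 = t ^ 4 * (1 - t ^ 2 / 2) := by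
    have : M.det ^ 2 = (M * Mᵀ).det := by
      rw [Matrix.det_mul, Matrix.det_transpose, sq]
    rw [this, hMMt]
    simp [Matrix.det_fin_three, Matrix.vecHead, Matrix.vecTail]
    ring
  have habs : |M.det| = t ^ 2 * Real.sqrt (1 - t ^ 2 / 2) := by
    rw [← Real.sqrt_sq_eq_abs, hdet2, show t ^ 4 * (1 - t ^ 2 / 2) = (t ^ 2) ^ 2 * (1 - t ^ 2 / 2) by ring,
      Real.sqrt_mul (by positivity), Real.sqrt_sq (by positivity)]
  rw [tetraVolume, ← hM, habs]

/-- On the double tetrahedron with the family of equihedral metrics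
`ℓ(t) = (t,1,1,1,1,t)`, `t ∈ (1,√2)`, realized by tetrahedra `v t`: as `t → √2⁻`, the
total curvature `EHR` tends to `8π`, the volume tends to `0`, and the volume-normalized
functional `VEHR = EHR / V^(1/3)` tends to `+∞`; hence `VEHR` is unbounded above. -/
theorem VEHR_unbounded (v : ℝ → Fin 4 → EuclideanSpace ℝ (Fin 3))
    (hnd : ∀ t ∈ Set.Ioo 1 (Real.sqrt 2), AffineIndependent ℝ (v t))
    (h01 : ∀ t ∈ Set.Ioo 1 (Real.sqrt 2), dist (v t 0) (v t 1) = t)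
    (h23 : ∀ t ∈ Set.Ioo 1 (Real.sqrt 2), dist (v t 2) (v t 3) = t)
    (h02 : ∀ t ∈ Set.Ioo 1 (Real.sqrt 2), dist (v t 0) (v t 2) = 1)
    (h03 : ∀ t ∈ Set.Ioo 1 (Real.sqrt 2), dist (v t 0) (v t 3) = 1)
    (h12 : ∀ t ∈ Set.Ioo 1 (Real.sqrt 2), dist (v t 1) (v t 2) = 1)
    (h13 : ∀ t ∈ Set.Ioo 1 (Real.sqrt 2), dist (v t 1) (v t 3) = 1) :
    Filter.Tendsto (fun t => EHR (v t))
        (nhdsWithin (Real.sqrt 2) (Set.Ioo 1 (Real.sqrt 2))) (nhds (8 * Real.pi)) ∧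
    Filter.Tendsto (fun t => 2 * tetraVolume (v t))
        (nhdsWithin (Real.sqrt 2) (Set.Ioo 1 (Real.sqrt 2))) (nhds 0) ∧
    Filter.Tendsto (fun t => EHR (v t) / (2 * tetraVolume (v t)) ^ ((1 : ℝ) / 3))
        (nhdsWithin (Real.sqrt 2) (Set.Ioo 1 (Real.sqrt 2))) Filter.atTop := by
  set S := Set.Ioo (1 : ℝ) (Real.sqrt 2) with hS
  set l := nhdsWithin (Real.sqrt 2) S with hl
  have hsq2 : Real.sqrt 2 ^ 2 = 2 := Real.sq_sqrt (by norm_num)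
  have hsq : ∀ t ∈ S, t ^ 2 < 2 := by
    intro t ht
    nlinarith [ht.1, ht.2, Real.sqrt_nonneg 2]
  -- explicit formulas
  set A : ℝ → ℝ := fun t =>
    2 * (2 * Real.pi - 2 * Real.arccos ((4 - 3 * t ^ 2) / (4 - t ^ 2))) * t +
      4 * (2 * Real.pi - 2 * Real.arccos (t ^ 2 / (4 - t ^ 2))) with hA
  set G : ℝ → ℝ := fun t => t ^ 2 * Real.sqrt (1 - t ^ 2 / 2) / 3 with hG
  have hEHR_eq : ∀ t ∈ S, EHR (v t) = A t := by
    intro t ht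
    have h1 := ht.1
    have h2 := hsq t ht
    have a01 := angle_t_edge h1 h2 (v t 0) (v t 1) (v t 2) (v t 3)
      (h01 t ht) (h02 t ht) (h03 t ht) (h12 t ht) (h13 t ht) (h23 t ht)
    have a23 := angle_t_edge h1 h2 (v t 2) (v t 3) (v t 0) (v t 1)
      (h23 t ht) (by rw [dist_comm]; exact h02 t ht) (by rw [dist_comm]; exact h12 t ht)
      (by rw [dist_comm]; exact h03 t ht) (by rw [dist_comm]; exact h13 t ht) (h01 t ht)
    have a02 := angle_unit_edge h1 h2 (v t 0) (v t 2) (v t 1) (v t 3)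
      (h02 t ht) (h01 t ht) (h03 t ht) (by rw [dist_comm]; exact h12 t ht) (h23 t ht) (h13 t ht)
    have a03 := angle_unit_edge h1 h2 (v t 0) (v t 3) (v t 1) (v t 2)
      (h03 t ht) (h01 t ht) (h02 t ht) (by rw [dist_comm]; exact h13 t ht)
      (by rw [dist_comm]; exact h23 t ht) (h12 t ht)
    have a12 := angle_unit_edge h1 h2 (v t 1) (v t 2) (v t 0) (v t 3)
      (h12 t ht) (by rw [dist_comm]; exact h01 t ht) (h13 t ht)
      (by rw [dist_comm]; exact h02 t ht) (h23 t ht) (h03 t ht)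
    have a13 := angle_unit_edge h1 h2 (v t 1) (v t 3) (v t 0) (v t 2)
      (h13 t ht) (by rw [dist_comm]; exact h01 t ht) (h12 t ht)
      (by rw [dist_comm]; exact h03 t ht) (by rw [dist_comm]; exact h23 t ht) (h02 t ht)
    simp only [EHR, edgeK, a01, a02, a03, a12, a13, a23, h01 t ht, h02 t ht, h03 t ht,
      h12 t ht, h13 t ht, h23 t ht, hA]
    ring
  have hVol_eq : ∀ t ∈ S, 2 * tetraVolume (v t) = G t := by
    intro t ht
    rw [volume_formula ht.1 (hsq t ht) (v t) (h01 t ht) (h23 t ht) (h02 t ht) (h03 t ht)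
      (h12 t ht) (h13 t ht), hG]
    ring
  -- continuity
  have hcA : ContinuousAt A (Real.sqrt 2) := by
    have hne : (4 : ℝ) - Real.sqrt 2 ^ 2 ≠ 0 := by rw [hsq2]; norm_num
    have c1 : ContinuousAt (fun t : ℝ => (4 - 3 * t ^ 2) / (4 - t ^ 2)) (Real.sqrt 2) :=
      ContinuousAt.div (by fun_prop) (by fun_prop) hne
    have c2 : ContinuousAt (fun t : ℝ => t ^ 2 / (4 - t ^ 2)) (Real.sqrt 2) :=
      ContinuousAt.div (by fun_prop) (by fun_prop) hne
    have d1 : ContinuousAt (fun t : ℝ => Real.arccos ((4 - 3 * t ^ 2) / (4 - t ^ 2)))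
        (Real.sqrt 2) := Real.continuous_arccos.continuousAt.comp c1
    have d2 : ContinuousAt (fun t : ℝ => Real.arccos (t ^ 2 / (4 - t ^ 2)))
        (Real.sqrt 2) := Real.continuous_arccos.continuousAt.comp c2
    rw [hA]
    exact ((continuousAt_const.mul (continuousAt_const.sub (continuousAt_const.mul d1))).mul
      continuousAt_id).add (continuousAt_const.mul (continuousAt_const.sub (continuousAt_const.mul d2)))
  have hAval : A (Real.sqrt 2) = 8 * Real.pi := by
    have e1 : (4 - 3 * Real.sqrt 2 ^ 2) / (4 - Real.sqrt 2 ^ 2) = -1 := by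
      rw [hsq2]; norm_num
    have e2 : Real.sqrt 2 ^ 2 / (4 - Real.sqrt 2 ^ 2) = 1 := by
      rw [hsq2]; norm_num
    rw [hA]
    simp only [e1, e2, Real.arccos_neg_one, Real.arccos_one]
    ring
  have T1 : Filter.Tendsto (fun t => EHR (v t)) l (nhds (8 * Real.pi)) := by
    refine Filter.Tendsto.congr' ?_ ((hAval ▸ hcA.tendsto).mono_left nhdsWithin_le_nhds)
    filter_upwards [self_mem_nhdsWithin] with t ht
    exact (hEHR_eq t ht).symm
  have hcG : ContinuousAt G (Real.sqrt 2) := by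
    rw [hG]
    fun_prop
  have hGval : G (Real.sqrt 2) = 0 := by
    rw [hG]
    simp only [hsq2]
    norm_num
  have T2 : Filter.Tendsto (fun t => 2 * tetraVolume (v t)) l (nhds 0) := by
    refine Filter.Tendsto.congr' ?_ ((hGval ▸ hcG.tendsto).mono_left nhdsWithin_le_nhds)
    filter_upwards [self_mem_nhdsWithin] with t ht
    exact (hVol_eq t ht).symm
  refine ⟨T1, T2, ?_⟩
  have hvolpos : ∀ᶠ t in l, 0 < 2 * tetraVolume (v t) := by
    filter_upwards [self_mem_nhdsWithin] with t ht
    rw [hVol_eq t ht, hG]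
    have h0 : 0 < t := lt_trans one_pos ht.1
    have h2 : 0 < 1 - t ^ 2 / 2 := by
      have := hsq t ht
      linarith
    positivity
  have hrpow0 : Filter.Tendsto (fun t => (2 * tetraVolume (v t)) ^ ((1 : ℝ) / 3)) l (nhds 0) := by
    have c := (Real.continuousAt_rpow_const 0 (1 / 3) (Or.inr (by norm_num))).tendsto
    have := c.comp T2
    simpa [Function.comp_def, Real.zero_rpow (by norm_num : (1 : ℝ) / 3 ≠ 0)] using this
  have hrpos : ∀ᶠ t in l, 0 < (2 * tetraVolume (v t)) ^ ((1 : ℝ) / 3) := by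
    filter_upwards [hvolpos] with t ht
    exact Real.rpow_pos_of_pos ht _
  have h3 : Filter.Tendsto (fun t => (2 * tetraVolume (v t)) ^ ((1 : ℝ) / 3)) l
      (nhdsWithin 0 (Set.Ioi 0)) := by
    rw [tendsto_nhdsWithin_iff]
    exact ⟨hrpow0, hrpos⟩
  have hinv : Filter.Tendsto (fun t => ((2 * tetraVolume (v t)) ^ ((1 : ℝ) / 3))⁻¹) l
      Filter.atTop := tendsto_inv_nhdsGT_zero.comp h3
  have hfin := Filter.Tendsto.pos_mul_atTop (by positivity : (0 : ℝ) < 8 * Real.pi) T1 hinv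
  simpa [div_eq_mul_inv] using hfin
end
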